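/- For every n ≥ 3, the enhanced power graph P_E(D_{2n}) of the dihedral group D_{2n} of order 2n is not minimally edge connected. -/

import Mathlib

/-- The degree of a vertex: the number of its neighbours. -/
noncomputable def gDeg {V : Type*} (G : SimpleGraph V) (v : V) : ℕ :=
  (G.neighborSet v).ncard

/-- The minimum degree of a graph. -/
noncomputable def minDeg {V : Type*} (G : SimpleGraph V) : ℕ :=
  sInf (Set.range (gDeg G))

/-- The edge connectivity: the minimum size of a set of edges whose removal
disconnects the graph. -/
noncomputable def edgeConn {V : Type*} (G : SimpleGraph V) : ℕ :=
  sInf {n : ℕ | ∃ S : Set (Sym2 V), S ⊆ G.edgeSet ∧ S.ncard = n ∧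
    ¬ (G.deleteEdges S).Connected}

/-- The vertex connectivity: the minimum size of a set of vertices whose removal
disconnects the graph or leaves a single vertex. -/
noncomputable def vertexConn {V : Type*} (G : SimpleGraph V) : ℕ :=
  sInf {n : ℕ | ∃ S : Set V, S.ncard = n ∧ Sᶜ.Nonempty ∧
    (¬ (G.induce Sᶜ).Preconnected ∨ Sᶜ.ncard = 1)}

/-- A graph is minimally edge connected if deleting any edge decreases the
edge connectivity by one. -/
def MinEdgeConnected {V : Type*} (G : SimpleGraph V) : Prop :=
  ∀ e ∈ G.edgeSet, edgeConn (G.deleteEdges {e}) = edgeConn G - 1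

/-- A graph is minimally connected if deleting any edge decreases the
vertex connectivity by one. -/
def MinConnected {V : Type*} (G : SimpleGraph V) : Prop :=
  ∀ e ∈ G.edgeSet, vertexConn (G.deleteEdges {e}) = vertexConn G - 1

/-- The power graph of a group: distinct `x, y` are adjacent iff one is a
natural power of the other. -/
def powerGraph (G : Type*) [Group G] : SimpleGraph G :=
  SimpleGraph.fromRel (fun x y => ∃ m : ℕ, y = x ^ m)

/-- The enhanced power graph of a group: distinct `x, y` are adjacent iff they
lie in a common cyclic subgroup. -/
def enhancedPowerGraph (G : Type*) [Group G] : SimpleGraph G :=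
  SimpleGraph.fromRel
    (fun x y => ∃ z : G, x ∈ Subgroup.zpowers z ∧ y ∈ Subgroup.zpowers z)

/-- The order superpower graph of a group: distinct `x, y` are adjacent iff the
order of one divides the order of the other. -/
def superpowerGraph (G : Type*) [Group G] : SimpleGraph G :=
  SimpleGraph.fromRel (fun x y => orderOf x ∣ orderOf y)

section Aux2
open DihedralGroup
variable {n : ℕ}

lemma r_zpow_aux (i : ZMod n) (k : ℤ) : ∃ j, (r i : DihedralGroup n) ^ k = r j := by
  have hnat : ∀ m : ℕ, ∃ j, (r i : DihedralGroup n) ^ m = r j := by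
    intro m
    induction m with
    | zero => exact ⟨0, rfl⟩
    | succ m ih => obtain ⟨j, hj⟩ := ih; exact ⟨j + i, by rw [pow_succ, hj, r_mul_r]⟩
  cases k with
  | ofNat m => simpa using hnat m
  | negSucc m =>
      obtain ⟨j, hj⟩ := hnat (m + 1)
      exact ⟨-j, by rw [zpow_negSucc, hj]; rfl⟩

lemma sr_zpow_aux (i : ZMod n) (k : ℤ) :
    (sr i : DihedralGroup n) ^ k = 1 ∨ (sr i : DihedralGroup n) ^ k = sr i := by
  have h2 : (sr i : DihedralGroup n) ^ (2 : ℤ) = 1 := by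
    rw [zpow_two]; exact sr_mul_self i
  have hk : (sr i : DihedralGroup n) ^ k = (sr i) ^ (k % 2) := by
    conv_lhs => rw [← Int.emod_add_mul_ediv k 2]
    rw [zpow_add, zpow_mul, h2, one_zpow, mul_one]
  rcases Int.emod_two_eq k with h | h <;> rw [hk, h]
  · left; exact zpow_zero _
  · right; exact zpow_one _

lemma epg_adj_one (x : DihedralGroup n) (hx : x ≠ 1) :
    (enhancedPowerGraph (DihedralGroup n)).Adj 1 x := by
  rw [enhancedPowerGraph, SimpleGraph.fromRel_adj]
  exact ⟨fun h => hx h.symm, Or.inl ⟨x, Subgroup.one_mem _, Subgroup.mem_zpowers x⟩⟩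

lemma epg_nbr_sr0 {y : DihedralGroup n}
    (h : (enhancedPowerGraph (DihedralGroup n)).Adj y (sr 0)) : y = 1 := by
  rw [enhancedPowerGraph, SimpleGraph.fromRel_adj] at h
  obtain ⟨hne, h⟩ := h
  have hz : ∃ z : DihedralGroup n, y ∈ Subgroup.zpowers z ∧ sr 0 ∈ Subgroup.zpowers z := by
    rcases h with ⟨z, h1, h2⟩ | ⟨z, h1, h2⟩
    exacts [⟨z, h1, h2⟩, ⟨z, h2, h1⟩]
  obtain ⟨z, hy, hs⟩ := hz
  obtain ⟨k, hk⟩ := Subgroup.mem_zpowers_iff.mp hs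
  cases z with
  | r i =>
      obtain ⟨j, hj⟩ := r_zpow_aux i k
      rw [hj] at hk
      simp at hk
  | sr i =>
      have hi : i = 0 := by
        rcases sr_zpow_aux i k with h' | h' <;> rw [h'] at hk
        · rw [one_def] at hk; cases hk
        · exact sr.inj hk
      subst hi
      obtain ⟨m, hm⟩ := Subgroup.mem_zpowers_iff.mp hy
      rcases sr_zpow_aux (0 : ZMod n) m with h' | h' <;> rw [h'] at hm
      · exact hm.symm
      · exact absurd hm.symm hne

lemma not_connected_of_isolated {V : Type*} {H : SimpleGraph V} {v u : V}
    (hv : ∀ w, ¬ H.Adj v w) (hne : v ≠ u) : ¬ H.Connected := by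
  intro hc
  obtain ⟨w⟩ := hc.preconnected v u
  cases w with
  | nil => exact hne rfl
  | cons h _ => exact hv _ h


end Aux2

open DihedralGroup

/-- For `n ≥ 3`, the enhanced power graph of the dihedral group of
order `2n` is not minimally edge connected. -/
theorem stmt_4 (n : ℕ) (hn : 3 ≤ n) :
    ¬ MinEdgeConnected (enhancedPowerGraph (DihedralGroup n)) := by
  intro hmin
  have hmin' : ∀ e ∈ (enhancedPowerGraph (DihedralGroup n)).edgeSet,
      edgeConn ((enhancedPowerGraph (DihedralGroup n)).deleteEdges {e}) =
        edgeConn (enhancedPowerGraph (DihedralGroup n)) - 1 := hmin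
  revert hmin'

  haveI : NeZero n := ⟨by omega⟩
  set G := enhancedPowerGraph (DihedralGroup n) with hGdef
  intro hmin
  have hz : ∀ a b : ℕ, a < n → b < n → ((a : ZMod n) = (b : ZMod n)) → a = b := by
    intro a b ha hb h
    have := congrArg ZMod.val h
    rwa [ZMod.val_cast_of_lt ha, ZMod.val_cast_of_lt hb] at this
  have h10 : (1 : ZMod n) ≠ 0 := by
    intro h
    have : (1 : ℕ) = 0 := hz 1 0 (by omega) (by omega) (by push_cast; exact h)
    omega
  have h20 : (2 : ZMod n) ≠ 0 := by
    intro h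
    have : (2 : ℕ) = 0 := hz 2 0 (by omega) (by omega) (by push_cast; exact h)
    omega
  have h12 : (1 : ZMod n) ≠ 2 := by
    intro h
    have : (1 : ℕ) = 2 := hz 1 2 (by omega) (by omega) (by push_cast; exact h)
    omega
  have h1ne : (r 1 : DihedralGroup n) ≠ 1 := by
    rw [one_def]; intro h; exact h10 (r.inj h)
  have h2ne : (r 2 : DihedralGroup n) ≠ 1 := by
    rw [one_def]; intro h; exact h20 (r.inj h)
  have hr12 : (r 1 : DihedralGroup n) ≠ r 2 := fun h => h12 (r.inj h)
  -- the edge e := s(r 1, r 2)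
  have headj : G.Adj (r 1) (r 2) := by
    rw [hGdef, enhancedPowerGraph, SimpleGraph.fromRel_adj]
    refine ⟨hr12, Or.inl ⟨r 1, Subgroup.mem_zpowers _, ⟨2, ?_⟩⟩⟩
    show (r 1 : DihedralGroup n) ^ (2 : ℤ) = r 2
    rw [zpow_two, r_mul_r, one_add_one_eq_two]
  have he : s(r 1, r 2) ∈ G.edgeSet := headj
  -- the edge e0 := s(1, sr 0)
  have hsr1 : (sr 0 : DihedralGroup n) ≠ 1 := by rw [one_def]; intro h; cases h
  have he0adj : G.Adj 1 (sr 0) := epg_adj_one _ hsr1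
  -- deleting any edge-set containing e0 from any subgraph of G disconnects
  have hnc : ∀ H : SimpleGraph (DihedralGroup n), H ≤ G →
      (∀ a b : DihedralGroup n, H.Adj a b → s(a, b) ≠ s(1, sr 0)) → ¬ H.Connected := by
    intro H hle hne0
    refine not_connected_of_isolated (v := sr 0) (u := r 1) ?_ (by simp)
    intro w hadj
    have hw : w = 1 := epg_nbr_sr0 (hle hadj).symm
    subst hw
    exact hne0 _ _ hadj (Sym2.eq_swap)
  have hG1 : edgeConn G ≤ 1 := by
    apply Nat.sInf_le
    refine ⟨{s(1, sr 0)}, by simpa using he0adj, Set.ncard_singleton _, ?_⟩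
    refine hnc _ (SimpleGraph.deleteEdges_le _) ?_
    intro a b hab h
    rw [SimpleGraph.deleteEdges_adj] at hab
    exact hab.2 (by rw [h]; exact rfl)
  have key := hmin _ he
  -- every vertex ≠ 1 is adjacent to 1 in G − e
  have hadj' : ∀ x : DihedralGroup n, x ≠ 1 →
      (G.deleteEdges {s(r 1, r 2)}).Adj 1 x := by
    intro x hx
    rw [SimpleGraph.deleteEdges_adj]
    refine ⟨epg_adj_one x hx, ?_⟩
    simp only [Set.mem_singleton_iff, Sym2.eq_iff]
    rintro (⟨h1, -⟩ | ⟨h1, -⟩)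
    · exact h1ne h1.symm
    · exact h2ne h1.symm
  have hconn : (G.deleteEdges {s(r 1, r 2)}).Connected := by
    rw [SimpleGraph.connected_iff]
    refine ⟨fun u v => ?_, ⟨1⟩⟩
    have h1 : ∀ w : DihedralGroup n, (G.deleteEdges {s(r 1, r 2)}).Reachable 1 w := by
      intro w
      by_cases hw : w = 1
      · subst hw; rfl
      · exact (hadj' w hw).reachable
    exact (h1 u).symm.trans (h1 v)
  have hLHS : edgeConn (G.deleteEdges {s(r 1, r 2)}) ≠ 0 := by
    intro h0
    rcases Nat.sInf_eq_zero.mp h0 with hmem | hempty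
    · obtain ⟨S, hSsub, hScard, hSdisc⟩ := hmem
      have hSfin : S.Finite := Set.Finite.subset (Set.toFinite _) hSsub
      rw [(Set.ncard_eq_zero hSfin).mp hScard, SimpleGraph.deleteEdges_empty] at hSdisc
      exact hSdisc hconn
    · have hone : (1 : ℕ) ∈ {m : ℕ | ∃ S : Set (Sym2 (DihedralGroup n)),
          S ⊆ (G.deleteEdges {s(r 1, r 2)}).edgeSet ∧ S.ncard = m ∧
          ¬ ((G.deleteEdges {s(r 1, r 2)}).deleteEdges S).Connected} := by
        refine ⟨{s(1, sr 0)}, ?_, Set.ncard_singleton _, ?_⟩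
        · simpa using hadj' (sr 0) hsr1
        · refine hnc _ ((SimpleGraph.deleteEdges_le _).trans (SimpleGraph.deleteEdges_le _)) ?_
          intro a b hab h
          rw [SimpleGraph.deleteEdges_adj] at hab
          exact hab.2 (by rw [h]; exact rfl)
      rw [hempty] at hone
      exact hone
  rw [key] at hLHS
  omega
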